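/- arXiv:1804.00961 — 2 statements merged into one kernel-verified Lean document; each statement's English description precedes it below -/
import Mathlib

section
/- For every x ≥ 2 one has the representation μ(x)/(x(x−1)) = Λ({0})/2 + ∫_0^1 (1−z)^{x−2} (∫_z^1 T(y) dy) dz; consequently the function x ↦ μ(x)/(x(x−1)) is decreasing on [2,∞), and equivalently x ↦ κ(x)/(x−1) is decreasing on [2,∞). -/
open MeasureTheory Real Set Filter Topology
open scoped ENNReal

/-- The integrand of `mu`, with its continuous extension `x(x-1)/2` at `p = 0`. -/
noncomputable def muInt (x p : ℝ) : ℝ :=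
  if p = 0 then x * (x - 1) / 2
  else (x * p - 1 + (1 - p) ^ x) / p ^ 2

/-- The rate of decrease `μ(x)` of the `Λ`-coalescent. -/
noncomputable def mu (Λ : Measure ℝ) (x : ℝ) : ℝ :=
  ∫ p in Set.Icc (0:ℝ) 1, muInt x p ∂Λ

/-- The rate of decrease per capita `κ(x) = μ(x)/x`. -/
noncomputable def kappa (Λ : Measure ℝ) (x : ℝ) : ℝ := mu Λ x / x

/-- `T(y) = ∫_{(y,1]} p⁻² Λ(dp)`. -/
noncomputable def T (Λ : Measure ℝ) (y : ℝ) : ℝ :=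
  ∫ p in Set.Ioc y 1, 1 / p ^ 2 ∂Λ

noncomputable def Tl (Λ : Measure ℝ) (y : ℝ) : ℝ≥0∞ :=
  ∫⁻ p in Set.Ioc y 1, ENNReal.ofReal (1/p^2) ∂Λ

noncomputable def Sl (Λ : Measure ℝ) (z : ℝ) : ℝ≥0∞ :=
  ∫⁻ y in Set.Ioo z 1, Tl Λ y

section Aux

lemma rpow_mul_self {t e : ℝ} (ht : 0 ≤ t) (he : e + 1 ≠ 0) : t ^ (e+1) = t ^ e * t := by
  rcases ht.eq_or_lt with h | h
  · rw [← h, Real.zero_rpow he, mul_zero]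
  · exact Real.rpow_add_one h.ne' e

lemma intInt {x p : ℝ} (hx : 2 ≤ x) (hp0 : 0 ≤ p) (hp1 : p ≤ 1) :
    IntervalIntegrable (fun z => (p - z) * (1 - z) ^ (x - 2)) volume 0 p := by
  rw [intervalIntegrable_iff_integrableOn_Ioc_of_le hp0]
  apply Measure.integrableOn_of_bounded (M := 1) measure_Ioc_lt_top.ne
  · apply Measurable.aestronglyMeasurable; fun_prop
  · filter_upwards [ae_restrict_mem measurableSet_Ioc] with z hz
    have h1 : (0:ℝ) ≤ p - z := by linarith [hz.2]
    have h2 : (0:ℝ) ≤ 1 - z := by linarith [hz.2]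
    have h3 : (1 - z) ^ (x - 2) ≤ 1 :=
      Real.rpow_le_one h2 (by linarith [hz.1]) (by linarith)
    rw [Real.norm_eq_abs, abs_of_nonneg (mul_nonneg h1 (Real.rpow_nonneg h2 _))]
    calc (p - z) * (1 - z) ^ (x - 2) ≤ 1 * 1 := by
          apply mul_le_mul (by linarith [hz.1]) h3 (Real.rpow_nonneg h2 _) one_pos.le
      _ = 1 := by ring

lemma intA {x : ℝ} (hx : 2 ≤ x) {p : ℝ} (hp0 : 0 ≤ p) (hp1 : p ≤ 1) :
    ∫ z in (0:ℝ)..p, (p - z) * (1 - z) ^ (x - 2) = (x*p - 1 + (1-p)^x) / (x*(x-1)) := by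
  have hx0 : (0:ℝ) < x := by linarith
  have hx1 : (0:ℝ) < x - 1 := by linarith
  set F : ℝ → ℝ := fun z => -((1-z)^x / x) + (1-p) * (1-z)^(x-1) / (x-1) with hF
  have hderiv : ∀ z ∈ uIcc (0:ℝ) p, HasDerivAt F ((p - z) * (1 - z) ^ (x - 2)) z := by
    intro z hz
    rw [Set.uIcc_of_le hp0] at hz
    have hz1 : (0:ℝ) ≤ 1 - z := by linarith [hz.2]
    have hin : HasDerivAt (fun z : ℝ => 1 - z) (-1) z := (hasDerivAt_id z).const_sub 1
    have h1 : HasDerivAt (fun z : ℝ => (1-z)^x) ((x * (1-z)^(x-1)) * (-1)) z :=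
      (Real.hasDerivAt_rpow_const (Or.inr (by linarith))).comp z hin
    have h2 : HasDerivAt (fun z : ℝ => (1-z)^(x-1)) (((x-1) * (1-z)^(x-1-1)) * (-1)) z :=
      (Real.hasDerivAt_rpow_const (Or.inr (by linarith))).comp z hin
    have h := ((h1.div_const x).neg).add ((h2.const_mul (1-p)).div_const (x-1))
    refine h.congr_deriv ?_
    have e1 : x - 1 - 1 = x - 2 := by ring
    rw [e1] at *
    have e2 : (1-z) ^ (x-1) = (1-z) ^ (x-2) * (1-z) := by
      have : x - 1 = (x - 2) + 1 := by ring
      rw [this, rpow_mul_self hz1 (by linarith)]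
    rw [e2]
    field_simp
    ring
  have := intervalIntegral.integral_eq_sub_of_hasDerivAt hderiv (intInt hx hp0 hp1)
  rw [this, hF]
  have e3 : (1-p) * (1-p)^(x-1) = (1-p)^x := by
    have : x = (x - 1) + 1 := by ring
    rw [this, rpow_mul_self (by linarith) (by linarith)]; ring
  simp only [sub_zero, Real.one_rpow]
  rw [e3]
  field_simp
  ring


lemma intA_nonneg {x : ℝ} (hx : 2 ≤ x) {p : ℝ} (hp0 : 0 ≤ p) (hp1 : p ≤ 1) :
    0 ≤ ∫ z in (0:ℝ)..p, (p - z) * (1 - z) ^ (x - 2) := by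
  apply intervalIntegral.integral_nonneg hp0
  intro z hz
  exact mul_nonneg (by linarith [hz.2]) (Real.rpow_nonneg (by linarith [hz.2]) _)

lemma intA_le {x : ℝ} (hx : 2 ≤ x) {p : ℝ} (hp0 : 0 ≤ p) (hp1 : p ≤ 1) :
    ∫ z in (0:ℝ)..p, (p - z) * (1 - z) ^ (x - 2) ≤ p^2 / 2 := by
  have h2 : ∫ z in (0:ℝ)..p, (p - z) = p^2/2 := by
    rw [intervalIntegral.integral_sub intervalIntegrable_const intervalIntegral.intervalIntegrable_id]
    simp [integral_id]
    ring
  calc ∫ z in (0:ℝ)..p, (p - z) * (1 - z) ^ (x - 2) ≤ ∫ z in (0:ℝ)..p, (p - z) := by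
        apply intervalIntegral.integral_mono_on hp0 (intInt hx hp0 hp1)
          (intervalIntegrable_const.sub intervalIntegral.intervalIntegrable_id)
        intro z hz
        have h1 : (0:ℝ) ≤ p - z := by linarith [hz.2]
        have h2 : (0:ℝ) ≤ 1 - z := by linarith [hz.2]
        calc (p - z) * (1 - z) ^ (x - 2) ≤ (p - z) * 1 :=
              mul_le_mul_of_nonneg_left (Real.rpow_le_one h2 (by linarith [hz.1]) (by linarith)) h1
          _ = p - z := mul_one _
    _ = p^2/2 := h2

lemma muInt_repr {x : ℝ} (hx : 2 ≤ x) {p : ℝ} (hp : p ∈ Ioc (0:ℝ) 1) :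
    muInt x p / (x*(x-1)) = (1/p^2) * ∫ z in (0:ℝ)..p, (p - z) * (1 - z) ^ (x - 2) := by
  have hx0 : (0:ℝ) < x := by linarith
  have hx1 : (0:ℝ) < x - 1 := by linarith
  rw [muInt, if_neg hp.1.ne', intA hx hp.1.le hp.2]
  have hp2 : p^2 ≠ 0 := pow_ne_zero _ hp.1.ne'
  field_simp

lemma muInt_nonneg {x : ℝ} (hx : 2 ≤ x) {p : ℝ} (hp : p ∈ Icc (0:ℝ) 1) : 0 ≤ muInt x p := by
  rcases eq_or_ne p 0 with h | h
  · rw [muInt, if_pos h]; nlinarith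
  · have hp' : p ∈ Ioc (0:ℝ) 1 := ⟨hp.1.lt_of_ne (Ne.symm h), hp.2⟩
    have := muInt_repr hx hp'
    have hx0 : (0:ℝ) < x * (x-1) := by nlinarith
    have h2 : 0 ≤ muInt x p / (x*(x-1)) := by
      rw [this]
      exact mul_nonneg (by positivity) (intA_nonneg hx hp'.1.le hp'.2)
    exact (div_nonneg_iff.mp h2).resolve_right (fun ⟨_, hc⟩ => absurd hx0 (not_lt.mpr hc)) |>.1

lemma muInt_div_le_half {x : ℝ} (hx : 2 ≤ x) {p : ℝ} (hp : p ∈ Icc (0:ℝ) 1) :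
    muInt x p / (x*(x-1)) ≤ 1/2 := by
  rcases eq_or_ne p 0 with h | h
  · rw [muInt, if_pos h]
    rw [div_le_div_iff₀ (by nlinarith) two_pos]
    nlinarith
  · have hp' : p ∈ Ioc (0:ℝ) 1 := ⟨hp.1.lt_of_ne (Ne.symm h), hp.2⟩
    rw [muInt_repr hx hp']
    have h1 := intA_le hx hp'.1.le hp'.2
    have hp2 : (0:ℝ) < p^2 := by positivity
    calc (1/p^2) * ∫ z in (0:ℝ)..p, (p - z) * (1 - z) ^ (x - 2)
        ≤ (1/p^2) * (p^2/2) := mul_le_mul_of_nonneg_left h1 (by positivity)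
      _ = 1/2 := by field_simp

lemma muInt_measurable (x : ℝ) : Measurable (muInt x) := by
  unfold muInt
  apply Measurable.ite (measurableSet_singleton 0) measurable_const
  fun_prop

variable (Λ : Measure ℝ) [IsFiniteMeasure Λ]


lemma Tl_antitone : Antitone (Tl Λ) := fun y₁ y₂ h =>
  lintegral_mono' (Measure.restrict_mono (Set.Ioc_subset_Ioc_left h) le_rfl) le_rfl

lemma Tl_measurable : Measurable (Tl Λ) := (Tl_antitone Λ).measurable

lemma Tl_le {y : ℝ} (hy : 0 < y) : Tl Λ y ≤ ENNReal.ofReal (1/y^2) * Λ (Set.Ioc y 1) := by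
  rw [Tl]
  calc ∫⁻ p in Set.Ioc y 1, ENNReal.ofReal (1/p^2) ∂Λ
      ≤ ∫⁻ _ in Set.Ioc y 1, ENNReal.ofReal (1/y^2) ∂Λ := by
        apply setLIntegral_mono' measurableSet_Ioc
        intro p hp
        apply ENNReal.ofReal_le_ofReal
        apply one_div_le_one_div_of_le (by positivity)
        have := hp.1
        nlinarith
    _ = ENNReal.ofReal (1/y^2) * Λ (Set.Ioc y 1) := by
        rw [setLIntegral_const]

lemma Tl_lt_top {y : ℝ} (hy : 0 < y) : Tl Λ y < ⊤ :=
  lt_of_le_of_lt (Tl_le Λ hy) (ENNReal.mul_lt_top ENNReal.ofReal_lt_top (measure_lt_top _ _))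

lemma T_integrableOn {y : ℝ} (hy : 0 < y) : IntegrableOn (fun p => 1/p^2) (Set.Ioc y 1) Λ := by
  apply Measure.integrableOn_of_bounded (M := 1/y^2) (measure_lt_top _ _).ne
    ((by fun_prop : Measurable fun p : ℝ => 1/p^2).aestronglyMeasurable)
  filter_upwards [ae_restrict_mem measurableSet_Ioc] with p hp
  rw [Real.norm_eq_abs, abs_of_nonneg (by positivity)]
  apply one_div_le_one_div_of_le (by positivity)
  nlinarith [hp.1]

lemma T_eq {y : ℝ} (hy : 0 < y) : ENNReal.ofReal (T Λ y) = Tl Λ y := by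
  rw [T, Tl]
  apply ofReal_integral_eq_lintegral_ofReal (T_integrableOn Λ hy)
  filter_upwards [ae_restrict_mem measurableSet_Ioc] with p hp
  positivity

lemma T_nonneg (y : ℝ) : 0 ≤ T Λ y := by
  apply integral_nonneg
  intro p
  positivity

lemma T_toReal {y : ℝ} (hy : 0 < y) : T Λ y = (Tl Λ y).toReal := by
  rw [← T_eq Λ hy, ENNReal.toReal_ofReal (T_nonneg Λ y)]

lemma Sl_antitone : Antitone (Sl Λ) := fun z₁ z₂ h =>
  lintegral_mono' (Measure.restrict_mono (Set.Ioo_subset_Ioo_left h) le_rfl) le_rfl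

lemma Sl_measurable : Measurable (Sl Λ) := (Sl_antitone Λ).measurable

lemma Sl_le {z : ℝ} (hz : 0 < z) : Sl Λ z ≤ ENNReal.ofReal (1/z^2) * Λ (Set.Ioc z 1) := by
  calc Sl Λ z ≤ ∫⁻ _ in Set.Ioo z 1, ENNReal.ofReal (1/z^2) * Λ (Set.Ioc z 1) := by
        apply setLIntegral_mono' measurableSet_Ioo
        intro y hy
        calc Tl Λ y ≤ ENNReal.ofReal (1/y^2) * Λ (Set.Ioc y 1) := Tl_le Λ (hz.trans hy.1)
          _ ≤ ENNReal.ofReal (1/z^2) * Λ (Set.Ioc z 1) := by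
              apply mul_le_mul'
              · apply ENNReal.ofReal_le_ofReal
                apply one_div_le_one_div_of_le (by positivity)
                nlinarith [hy.1]
              · exact measure_mono (Set.Ioc_subset_Ioc_left hy.1.le)
    _ ≤ ENNReal.ofReal (1/z^2) * Λ (Set.Ioc z 1) := by
        rw [setLIntegral_const]
        conv_rhs => rw [← mul_one (ENNReal.ofReal (1/z^2) * Λ (Set.Ioc z 1))]
        gcongr
        calc volume (Set.Ioo z 1) ≤ volume (Set.Ioo (0:ℝ) 1) :=
              measure_mono (Set.Ioo_subset_Ioo_left hz.le)
          _ = 1 := by simp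

lemma Sl_lt_top {z : ℝ} (hz : 0 < z) : Sl Λ z < ⊤ :=
  lt_of_le_of_lt (Sl_le Λ hz) (ENNReal.mul_lt_top ENNReal.ofReal_lt_top (measure_lt_top _ _))

lemma setLIntegral_indicator' {μ : Measure ℝ} {s t : Set ℝ} (ht : MeasurableSet t)
    (f : ℝ → ℝ≥0∞) :
    ∫⁻ a in s, t.indicator f a ∂μ = ∫⁻ a in s ∩ t, f a ∂μ := by
  rw [lintegral_indicator ht, Measure.restrict_restrict ht, Set.inter_comm]

/-- The kernel of the first Fubini swap. -/
noncomputable def K (x p z : ℝ) : ℝ≥0∞ :=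
  (Set.Iio p).indicator (fun z => ENNReal.ofReal ((1-z)^(x-2) * ((p - z)/p^2))) z

lemma step1 {x : ℝ} (hx : 2 ≤ x) {p : ℝ} (hp : p ∈ Ioc (0:ℝ) 1) :
    ENNReal.ofReal (muInt x p / (x*(x-1))) = ∫⁻ z in Ioo (0:ℝ) 1, K x p z := by
  unfold K
  rw [setLIntegral_indicator' measurableSet_Iio]
  rw [Set.Ioo_inter_Iio, min_eq_right hp.2]
  have hInt : IntegrableOn (fun z => (1-z)^(x-2) * ((p - z)/p^2)) (Ioo 0 p) volume := by
    apply Measure.integrableOn_of_bounded (M := 1/p^2) measure_Ioo_lt_top.ne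
      ((by fun_prop : Measurable fun z : ℝ => (1-z)^(x-2) * ((p - z)/p^2)).aestronglyMeasurable)
    filter_upwards [ae_restrict_mem measurableSet_Ioo] with z hz
    have h1 : (0:ℝ) ≤ 1 - z := by nlinarith [hz.2, hp.2]
    have h2 : (0:ℝ) ≤ p - z := by linarith [hz.2]
    have h3 : (1 - z) ^ (x-2) ≤ 1 := Real.rpow_le_one h1 (by nlinarith [hz.1]) (by linarith)
    rw [Real.norm_eq_abs, abs_of_nonneg (mul_nonneg (Real.rpow_nonneg h1 _) (by positivity))]
    calc (1-z)^(x-2) * ((p - z)/p^2) ≤ 1 * ((p - z)/p^2) :=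
          mul_le_mul_of_nonneg_right h3 (by positivity)
      _ = (p - z)/p^2 := one_mul _
      _ ≤ 1/p^2 := by
          have hp0 := hp.1
          have := hz.1
          gcongr
          linarith [hz.1, hp.2]
  rw [← ofReal_integral_eq_lintegral_ofReal hInt ?_]
  · congr 1
    rw [muInt_repr hx hp, ← integral_Ioc_eq_integral_Ioo,
        ← intervalIntegral.integral_of_le hp.1.le]
    simp_rw [show ∀ z : ℝ, (1-z)^(x-2) * ((p - z)/p^2) = ((p - z) * (1-z)^(x-2)) * (1/p^2)
      from fun z => by ring]
    rw [intervalIntegral.integral_mul_const]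
    ring
  · filter_upwards [ae_restrict_mem measurableSet_Ioo] with z hz
    have h1 : (0:ℝ) ≤ 1 - z := by nlinarith [hz.2, hp.2]
    have h2 : (0:ℝ) ≤ p - z := by linarith [hz.2]
    positivity

lemma step34 (Λ : Measure ℝ) [IsFiniteMeasure Λ] {x : ℝ} (hx : 2 ≤ x) {z : ℝ}
    (hz : z ∈ Ioo (0:ℝ) 1) :
    ∫⁻ p in Ioc (0:ℝ) 1, K x p z ∂Λ = ENNReal.ofReal ((1-z)^(x-2)) * Sl Λ z := by
  have h1z : (0:ℝ) ≤ 1 - z := by linarith [hz.2]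
  have e0 : ∀ p, K x p z = (Set.Ioi z).indicator
      (fun p => ENNReal.ofReal ((1-z)^(x-2)) * ENNReal.ofReal ((p - z)/p^2)) p := by
    intro p
    simp [K, Set.indicator_apply, Set.mem_Iio, Set.mem_Ioi,
      ← ENNReal.ofReal_mul (Real.rpow_nonneg h1z _)]
  simp_rw [e0]
  rw [setLIntegral_indicator' measurableSet_Ioi, Set.Ioc_inter_Ioi, max_eq_right hz.1.le,
      lintegral_const_mul'' _ (by fun_prop : Measurable fun p : ℝ =>
        ENNReal.ofReal ((p - z)/p^2)).aemeasurable]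
  congr 1
  -- ∫⁻ p in Ioc z 1, ofReal ((p-z)/p²) ∂Λ = Sl Λ z
  have e : ∀ p ∈ Ioc z 1, ENNReal.ofReal ((p - z)/p^2) =
      ∫⁻ y in Ioo z 1, (Set.Iio p).indicator (fun _ => ENNReal.ofReal (1/p^2)) y ∂volume := by
    intro p hp
    rw [setLIntegral_indicator' measurableSet_Iio, setLIntegral_const, Set.Ioo_inter_Iio,
        min_eq_right hp.2, Real.volume_Ioo, ← ENNReal.ofReal_mul (by positivity)]
    congr 1
    ring
  rw [setLIntegral_congr_fun measurableSet_Ioc e]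
  rw [lintegral_lintegral_swap ?_]
  · apply setLIntegral_congr_fun measurableSet_Ioo ?_
    intro y hy
    have e2 : ∀ p, (Set.Iio p).indicator (fun _ => ENNReal.ofReal (1/p^2)) y
        = (Set.Ioi y).indicator (fun p => ENNReal.ofReal (1/p^2)) p := by
      intro p; simp [Set.indicator_apply, Set.mem_Iio, Set.mem_Ioi]
    simp_rw [e2]
    rw [setLIntegral_indicator' measurableSet_Ioi, Set.Ioc_inter_Ioi, max_eq_right hy.1.le]
    rfl
  · apply Measurable.aemeasurable
    have : (Function.uncurry fun p y => (Set.Iio p).indicator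
        (fun _ => ENNReal.ofReal (1/p^2)) y) =
        fun q : ℝ × ℝ => if q.2 ∈ Set.Iio q.1 then ENNReal.ofReal (1/q.1^2) else 0 := by
      funext q
      simp [Function.uncurry, Set.indicator_apply]
    rw [this]
    exact Measurable.ite (measurableSet_lt measurable_snd measurable_fst)
      (by fun_prop) measurable_const

lemma chain (Λ : Measure ℝ) [IsFiniteMeasure Λ] {x : ℝ} (hx : 2 ≤ x) :
    ∫⁻ p in Ioc (0:ℝ) 1, ENNReal.ofReal (muInt x p / (x*(x-1))) ∂Λ
      = ∫⁻ z in Ioo (0:ℝ) 1, ENNReal.ofReal ((1-z)^(x-2)) * Sl Λ z := by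
  calc ∫⁻ p in Ioc (0:ℝ) 1, ENNReal.ofReal (muInt x p / (x*(x-1))) ∂Λ
      = ∫⁻ p in Ioc (0:ℝ) 1, ∫⁻ z in Ioo (0:ℝ) 1, K x p z ∂volume ∂Λ :=
        setLIntegral_congr_fun measurableSet_Ioc (fun p hp => step1 hx hp)
    _ = ∫⁻ z in Ioo (0:ℝ) 1, ∫⁻ p in Ioc (0:ℝ) 1, K x p z ∂Λ ∂volume := by
        apply lintegral_lintegral_swap
        apply Measurable.aemeasurable
        have : (Function.uncurry fun p z => K x p z) =
            fun q : ℝ × ℝ => if q.2 ∈ Set.Iio q.1 then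
              ENNReal.ofReal ((1-q.2)^(x-2) * ((q.1 - q.2)/q.1^2)) else 0 := by
          funext q
          simp [Function.uncurry, K, Set.indicator_apply]
        rw [this]
        apply Measurable.ite (measurableSet_lt measurable_snd measurable_fst) _ measurable_const
        fun_prop
    _ = ∫⁻ z in Ioo (0:ℝ) 1, ENNReal.ofReal ((1-z)^(x-2)) * Sl Λ z ∂volume :=
        setLIntegral_congr_fun measurableSet_Ioo (fun z hz => step34 Λ hx hz)

variable (Λ : Measure ℝ) [IsFiniteMeasure Λ]

lemma T_intOn {z : ℝ} (hz : 0 < z) : IntegrableOn (T Λ) (Ioc z 1) volume := by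
  have hg : IntegrableOn (fun y => (Tl Λ y).toReal) (Ioc z 1) volume := by
    apply Measure.integrableOn_of_bounded
      (M := (ENNReal.ofReal (1/z^2) * Λ (Set.Ioc z 1)).toReal) measure_Ioc_lt_top.ne
      ((Tl_measurable Λ).ennreal_toReal.aestronglyMeasurable)
    filter_upwards [ae_restrict_mem measurableSet_Ioc] with y hy
    rw [Real.norm_eq_abs, abs_of_nonneg ENNReal.toReal_nonneg]
    apply ENNReal.toReal_mono (ENNReal.mul_lt_top ENNReal.ofReal_lt_top (measure_lt_top _ _)).ne
    calc Tl Λ y ≤ ENNReal.ofReal (1/y^2) * Λ (Set.Ioc y 1) := Tl_le Λ (hz.trans hy.1)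
      _ ≤ ENNReal.ofReal (1/z^2) * Λ (Set.Ioc z 1) := by
          apply mul_le_mul'
          · apply ENNReal.ofReal_le_ofReal
            apply one_div_le_one_div_of_le (by positivity)
            nlinarith [hy.1]
          · exact measure_mono (Set.Ioc_subset_Ioc_left hy.1.le)
  exact hg.congr (by
    filter_upwards [ae_restrict_mem measurableSet_Ioc] with y hy
    exact (T_toReal Λ (hz.trans hy.1)).symm)

lemma S_eq {z : ℝ} (hz : z ∈ Ioo (0:ℝ) 1) :
    ENNReal.ofReal (∫ y in z..1, T Λ y) = Sl Λ z := by
  rw [intervalIntegral.integral_of_le hz.2.le,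
      ofReal_integral_eq_lintegral_ofReal (T_intOn Λ hz.1)
        (Eventually.of_forall (T_nonneg Λ)), Sl,
      ← setLIntegral_congr (Ioo_ae_eq_Ioc (a := z) (b := (1:ℝ)))]
  apply setLIntegral_congr_fun measurableSet_Ioo
  exact fun y hy => T_eq Λ (hz.1.trans hy.1)

lemma S_nonneg {z : ℝ} (hz : z ≤ 1) : 0 ≤ ∫ y in z..1, T Λ y :=
  intervalIntegral.integral_nonneg hz fun y _ => T_nonneg Λ y

lemma S_toReal {z : ℝ} (hz : z ∈ Ioo (0:ℝ) 1) :
    ∫ y in z..1, T Λ y = (Sl Λ z).toReal := by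
  rw [← S_eq Λ hz, ENNReal.toReal_ofReal (S_nonneg Λ hz.2.le)]

lemma muInt_intOn {x : ℝ} (hx : 2 ≤ x) : IntegrableOn (muInt x) (Icc (0:ℝ) 1) Λ := by
  have hc : (0:ℝ) < x*(x-1) := by nlinarith
  apply Measure.integrableOn_of_bounded (M := x*(x-1)/2) (measure_lt_top _ _).ne
    (muInt_measurable x).aestronglyMeasurable
  filter_upwards [ae_restrict_mem measurableSet_Icc] with p hp
  rw [Real.norm_eq_abs, abs_of_nonneg (muInt_nonneg hx hp)]
  have := muInt_div_le_half (p := p) hx hp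
  rw [div_le_div_iff₀ hc two_pos] at this
  linarith

lemma central {x : ℝ} (hx : 2 ≤ x) :
    mu Λ x / (x*(x-1)) = (Λ {0}).toReal / 2 +
      (∫⁻ z in Ioo (0:ℝ) 1, ENNReal.ofReal ((1-z)^(x-2)) * Sl Λ z).toReal := by
  have hc : (0:ℝ) < x*(x-1) := by nlinarith
  have hsplit : Icc (0:ℝ) 1 = {0} ∪ Ioc 0 1 := by
    rw [← Set.Ioc_insert_left zero_le_one, Set.insert_eq]
  have hmu : mu Λ x = (Λ {0}).toReal * (x*(x-1)/2) + ∫ p in Ioc (0:ℝ) 1, muInt x p ∂Λ := by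
    rw [mu, hsplit, setIntegral_union (by simp) measurableSet_Ioc
      (((muInt_intOn Λ hx)).mono_set (by rw [hsplit]; exact Set.subset_union_left))
      (((muInt_intOn Λ hx)).mono_set (by rw [hsplit]; exact Set.subset_union_right)),
      integral_singleton]
    simp [muInt, smul_eq_mul, measureReal_def]
  rw [hmu, add_div]
  congr 1
  · have hx1' : x - 1 ≠ 0 := (by linarith : (0:ℝ) < x - 1).ne'
    field_simp
  · rw [show (∫ p in Ioc (0:ℝ) 1, muInt x p ∂Λ)/(x*(x-1))
        = ∫ p in Ioc (0:ℝ) 1, muInt x p / (x*(x-1)) ∂Λ from (integral_div _ _).symm,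
      integral_eq_lintegral_of_nonneg_ae ?_ ((muInt_measurable x).div_const _).aestronglyMeasurable,
      chain Λ hx]
    filter_upwards [ae_restrict_mem measurableSet_Ioc] with p hp
    exact div_nonneg (muInt_nonneg hx ⟨hp.1.le, hp.2⟩) hc.le

lemma L_ne_top {x : ℝ} (hx : 2 ≤ x) :
    (∫⁻ z in Ioo (0:ℝ) 1, ENNReal.ofReal ((1-z)^(x-2)) * Sl Λ z) ≠ ⊤ := by
  rw [← chain Λ hx]
  apply ne_of_lt
  calc ∫⁻ p in Ioc (0:ℝ) 1, ENNReal.ofReal (muInt x p / (x*(x-1))) ∂Λ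
      ≤ ∫⁻ _ in Ioc (0:ℝ) 1, ENNReal.ofReal (1/2) ∂Λ :=
        setLIntegral_mono' measurableSet_Ioc fun p hp =>
          ENNReal.ofReal_le_ofReal (muInt_div_le_half hx ⟨hp.1.le, hp.2⟩)
    _ = ENNReal.ofReal (1/2) * Λ (Ioc 0 1) := setLIntegral_const _ _
    _ < ⊤ := ENNReal.mul_lt_top ENNReal.ofReal_lt_top (measure_lt_top _ _)

lemma L_toReal {x : ℝ} (hx : 2 ≤ x) :
    (∫⁻ z in Ioo (0:ℝ) 1, ENNReal.ofReal ((1-z)^(x-2)) * Sl Λ z).toReal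
      = ∫ z in (0:ℝ)..1, (1-z)^(x-2) * ∫ y in z..1, T Λ y := by
  rw [intervalIntegral.integral_of_le zero_le_one,
      ← setIntegral_congr_set (Ioo_ae_eq_Ioc (a := (0:ℝ)) (b := (1:ℝ))),
      integral_eq_lintegral_of_nonneg_ae ?_ ?_]
  · congr 1
    apply setLIntegral_congr_fun measurableSet_Ioo
    intro z hz
    dsimp only
    rw [ENNReal.ofReal_mul (Real.rpow_nonneg (by linarith [hz.2]) _), S_eq Λ hz]
  · filter_upwards [ae_restrict_mem measurableSet_Ioo] with z hz
    exact mul_nonneg (Real.rpow_nonneg (by linarith [hz.2]) _) (S_nonneg Λ hz.2.le)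
  · apply AEStronglyMeasurable.congr
      (f := fun z => (1-z)^(x-2) * (Sl Λ z).toReal)
      (by exact ((by fun_prop : Measurable fun z : ℝ => (1-z)^(x-2)).mul
        (Sl_measurable Λ).ennreal_toReal).aestronglyMeasurable)
    filter_upwards [ae_restrict_mem measurableSet_Ioo] with z hz
    rw [S_toReal Λ hz]


end Aux

/-- Representation of `μ(x)/(x(x−1))` and its monotonicity: for every `x ≥ 2`,
`μ(x)/(x(x−1)) = Λ({0})/2 + ∫_0^1 (1−z)^{x−2} (∫_z^1 T(y) dy) dz`; consequently
`x ↦ μ(x)/(x(x−1))` is decreasing on `[2, ∞)`, equivalently `x ↦ κ(x)/(x−1)` is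
decreasing on `[2, ∞)`. -/
theorem mu_div_repr_and_antitone (Λ : Measure ℝ) [IsFiniteMeasure Λ] (hΛ : Λ ≠ 0)
    (hsupp : Λ (Set.Icc (0:ℝ) 1)ᶜ = 0) :
    (∀ x : ℝ, 2 ≤ x →
      mu Λ x / (x * (x - 1)) =
        (Λ {0}).toReal / 2 +
          ∫ z in (0:ℝ)..1, (1 - z) ^ (x - 2) * ∫ y in z..1, T Λ y) ∧
    AntitoneOn (fun x => mu Λ x / (x * (x - 1))) (Set.Ici 2) ∧
    AntitoneOn (fun x => kappa Λ x / (x - 1)) (Set.Ici 2) := by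
  have part1 : ∀ x : ℝ, 2 ≤ x → mu Λ x / (x * (x - 1)) =
      (Λ {0}).toReal / 2 + ∫ z in (0:ℝ)..1, (1 - z) ^ (x - 2) * ∫ y in z..1, T Λ y := by
    intro x hx
    rw [central Λ hx, L_toReal Λ hx]
  have part2 : AntitoneOn (fun x => mu Λ x / (x * (x - 1))) (Set.Ici 2) := by
    intro a ha b hb hab
    simp only
    rw [central Λ ha, central Λ hb]
    apply add_le_add_right
    apply ENNReal.toReal_mono (L_ne_top Λ ha)
    apply setLIntegral_mono' measurableSet_Ioo fun z hz => ?_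
    apply mul_le_mul_left
    apply ENNReal.ofReal_le_ofReal
    exact Real.rpow_le_rpow_of_exponent_ge (by linarith [hz.2]) (by linarith [hz.1])
      (by linarith)
  refine ⟨part1, part2, ?_⟩
  intro a ha b hb hab
  simp only [kappa, div_div]
  exact part2 ha hb hab
end

section
/- The function κ is differentiable on (2,∞), and for every x > 2 its derivative is given by κ'(x) = Λ({0})/2 + ∫_0^1 (1−y)^{x−1} log(1/(1−y)) T(y) dy. -/
open MeasureTheory Real Set Filter Topology

/-- pointwise bound on the kernel φ x y = (1-y)^(x-1) * log(1/(1-y)). -/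
lemma phi_nonneg {x y : ℝ} (hx : 2 ≤ x) (hy0 : 0 ≤ y) (hy1 : y ≤ 1) :
    0 ≤ (1 - y) ^ (x - 1) * Real.log (1 / (1 - y)) := by
  rcases eq_or_lt_of_le hy1 with rfl | hy1'
  · simp
  · have hu : 0 < 1 - y := by linarith
    have hlog : 0 ≤ Real.log (1 / (1 - y)) := by
      rw [one_div, Real.log_inv]
      simpa using Real.log_nonpos (by linarith) (by linarith)
    exact mul_nonneg (Real.rpow_nonneg hu.le _) hlog

lemma phi_le {x y : ℝ} (hx : 2 ≤ x) (hy0 : 0 ≤ y) (hy1 : y ≤ 1) :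
    (1 - y) ^ (x - 1) * Real.log (1 / (1 - y)) ≤ y := by
  rcases eq_or_lt_of_le hy1 with rfl | hy1'
  · simp
  · have hu : 0 < 1 - y := by linarith
    have hlog : 0 ≤ Real.log (1 / (1 - y)) := by
      rw [one_div, Real.log_inv]
      simpa using Real.log_nonpos (by linarith) (by linarith)
    have h1 : (1 - y) ^ (x - 1) ≤ (1 - y) := by
      calc (1 - y) ^ (x - 1) ≤ (1 - y) ^ (1:ℝ) :=
            Real.rpow_le_rpow_of_exponent_ge hu (by linarith) (by linarith)
        _ = 1 - y := Real.rpow_one _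
    have h2 : Real.log (1 / (1 - y)) ≤ 1 / (1 - y) - 1 :=
      Real.log_le_sub_one_of_pos (by positivity)
    calc (1 - y) ^ (x - 1) * Real.log (1 / (1 - y))
        ≤ (1 - y) * Real.log (1 / (1 - y)) := mul_le_mul_of_nonneg_right h1 hlog
      _ ≤ (1 - y) * (1 / (1 - y) - 1) := mul_le_mul_of_nonneg_left h2 hu.le
      _ = y := by field_simp; ring

lemma phi_meas {x : ℝ} (hx : 2 ≤ x) :
    Measurable (fun y : ℝ => (1 - y) ^ (x - 1) * Real.log (1 / (1 - y))) := by
  apply Measurable.mul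
  · exact ((Real.continuous_rpow_const (by linarith)).comp
      (continuous_const.sub continuous_id)).measurable
  · exact Real.measurable_log.comp
      ((measurable_const (a := (1:ℝ))).div (measurable_const.sub measurable_id))

lemma phi_intervalIntegrable {x p : ℝ} (hp0 : 0 ≤ p) (hp1 : p ≤ 1) (hx : 2 ≤ x) :
    IntervalIntegrable (fun y : ℝ => (1 - y) ^ (x - 1) * Real.log (1 / (1 - y)))
      volume 0 p := by
  rw [intervalIntegrable_iff_integrableOn_Ioc_of_le hp0]
  refine Integrable.mono' (integrable_const 1) ((phi_meas hx).aestronglyMeasurable) ?_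
  filter_upwards [ae_restrict_mem measurableSet_Ioc] with y hy
  rw [Real.norm_eq_abs, abs_of_nonneg (phi_nonneg hx hy.1.le (hy.2.trans hp1))]
  exact (phi_le hx hy.1.le (hy.2.trans hp1)).trans (hy.2.trans hp1)

lemma phi_integral_nonneg {x p : ℝ} (hp0 : 0 ≤ p) (hp1 : p ≤ 1) (hx : 2 ≤ x) :
    0 ≤ ∫ y in (0:ℝ)..p, (1 - y) ^ (x - 1) * Real.log (1 / (1 - y)) := by
  refine intervalIntegral.integral_nonneg hp0 fun y hy => ?_
  exact phi_nonneg hx hy.1 (hy.2.trans hp1)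

lemma phi_integral_le {x p : ℝ} (hp0 : 0 ≤ p) (hp1 : p ≤ 1) (hx : 2 ≤ x) :
    (∫ y in (0:ℝ)..p, (1 - y) ^ (x - 1) * Real.log (1 / (1 - y))) ≤ p ^ 2 / 2 := by
  have h1 : (∫ y in (0:ℝ)..p, (1 - y) ^ (x - 1) * Real.log (1 / (1 - y)))
      ≤ ∫ y in (0:ℝ)..p, y := by
    refine intervalIntegral.integral_mono_on hp0 (phi_intervalIntegrable hp0 hp1 hx)
      (intervalIntegral.intervalIntegrable_id) fun y hy => phi_le hx hy.1 (hy.2.trans hp1)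
  have h2 : (∫ y in (0:ℝ)..p, y) = p ^ 2 / 2 := by
    simp [integral_id]
  linarith

lemma G_tendsto {x : ℝ} (hx : 2 < x) :
    Tendsto (fun u : ℝ => u ^ x * Real.log u / x - u ^ x / x ^ 2) (𝓝[>] (0:ℝ)) (𝓝 0) := by
  have t1 : Tendsto (fun u : ℝ => u ^ x) (𝓝[>](0:ℝ)) (𝓝 0) := by
    have := (Real.continuous_rpow_const (by linarith : (0:ℝ) ≤ x)).tendsto 0
    rw [Real.zero_rpow (by linarith : x ≠ 0)] at this
    exact this.mono_left nhdsWithin_le_nhds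
  have t2 := tendsto_log_mul_rpow_nhdsGT_zero (by linarith : (0:ℝ) < x)
  have := (t2.div_const x).sub (t1.div_const (x ^ 2))
  simp only [zero_div, sub_zero] at this
  refine this.congr fun u => by ring

lemma G_cont {x : ℝ} (hx : 2 < x) :
    ContinuousOn (fun u : ℝ => u ^ x * Real.log u / x - u ^ x / x ^ 2) (Icc 0 1) := by
  intro u hu
  rcases eq_or_lt_of_le hu.1 with rfl | hpos
  · -- continuity at 0 within Icc
    have hG0 : (fun u : ℝ => u ^ x * Real.log u / x - u ^ x / x ^ 2) 0 = 0 := by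
      simp [Real.zero_rpow (show x ≠ 0 by linarith)]
    refine ContinuousWithinAt.mono ?_ (Icc_subset_Icc_right le_rfl)
    have hsub : Icc (0:ℝ) 1 ⊆ {0} ∪ Ioi 0 := by
      intro t ht
      rcases eq_or_lt_of_le ht.1 with rfl | h
      · exact Or.inl rfl
      · exact Or.inr h
    refine ContinuousWithinAt.mono ?_ hsub
    unfold ContinuousWithinAt
    rw [hG0, nhdsWithin_union, nhdsWithin_singleton, tendsto_sup]
    refine ⟨?_, G_tendsto hx⟩
    have := tendsto_pure_nhds
      (fun u : ℝ => u ^ x * Real.log u / x - u ^ x / x ^ 2) 0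
    simpa [Real.zero_rpow (show x ≠ 0 by linarith)] using this
  · have hne : u ≠ 0 := ne_of_gt hpos
    apply ContinuousWithinAt.sub
    · exact (((Real.continuousAt_rpow_const u x (Or.inl hne)).mul
        (Real.continuousAt_log hne)).div_const x).continuousWithinAt
    · exact ((Real.continuousAt_rpow_const u x (Or.inl hne)).div_const
        (x ^ 2)).continuousWithinAt

/-- Key FTC identity. -/
lemma key_integral {x p : ℝ} (hx : 2 < x) (hp0 : 0 < p) (hp1 : p ≤ 1) :
    (∫ y in (0:ℝ)..p, (1 - y) ^ (x - 1) * Real.log (1 / (1 - y)))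
      = (1 - (1 - p) ^ x + x * (1 - p) ^ x * Real.log (1 - p)) / x ^ 2 := by
  have hxne : x ≠ 0 := by linarith
  set F : ℝ → ℝ := fun y => (1 - y) ^ x * Real.log (1 - y) / x - (1 - y) ^ x / x ^ 2 with hF
  have hcont : ContinuousOn F (Icc 0 p) := by
    have : ContinuousOn (fun u : ℝ => u ^ x * Real.log u / x - u ^ x / x ^ 2)
        (Icc 0 1) := G_cont hx
    have hmap : MapsTo (fun y : ℝ => 1 - y) (Icc 0 p) (Icc 0 1) := by
      intro y hy
      simp only [mem_Icc] at hy ⊢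
      constructor <;> linarith [hy.1, hy.2]
    exact this.comp ((continuous_const.sub continuous_id).continuousOn) hmap
  have hderiv : ∀ y ∈ Ioo 0 p, HasDerivWithinAt F
      ((1 - y) ^ (x - 1) * Real.log (1 / (1 - y))) (Ioi y) y := by
    intro y hy
    have hu : 0 < 1 - y := by linarith [hy.2]
    have h1 : HasDerivAt (fun y : ℝ => 1 - y) (-1) y := by
      simpa using (hasDerivAt_id y).const_sub 1
    have h2 : HasDerivAt (fun y : ℝ => (1 - y) ^ x) (-1 * x * (1 - y) ^ (x - 1)) y :=
      h1.rpow_const (Or.inl hu.ne')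
    have h3 : HasDerivAt (fun y : ℝ => Real.log (1 - y)) (-1 / (1 - y)) y :=
      h1.log hu.ne'
    have h4 := ((h2.mul h3).div_const x).sub (h2.div_const (x ^ 2))
    have heq : (-1 * x * (1 - y) ^ (x - 1) * Real.log (1 - y)
          + (1 - y) ^ x * (-1 / (1 - y))) / x - -1 * x * (1 - y) ^ (x - 1) / x ^ 2
        = (1 - y) ^ (x - 1) * Real.log (1 / (1 - y)) := by
      have hxe : (1 - y) ^ x = (1 - y) ^ (x - 1) * (1 - y) := by
        rw [← Real.rpow_add_one hu.ne', sub_add_cancel]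
      rw [hxe, one_div, Real.log_inv]
      field_simp
      ring
    rw [← heq]
    exact h4.hasDerivWithinAt
  have hint := phi_intervalIntegrable hp0.le hp1 hx.le
  have := intervalIntegral.integral_eq_sub_of_hasDeriv_right_of_le hp0.le hcont hderiv hint
  rw [this, hF]
  simp only [sub_zero, Real.one_rpow, Real.log_one]
  field_simp
  ring

lemma N_eq {x p : ℝ} (hx : 2 < x) (hp0 : 0 ≤ p) (hp1 : p ≤ 1) :
    x * p - 1 + (1 - p) ^ x = ∫ t in (0:ℝ)..p, (x - x * (1 - t) ^ (x - 1)) := by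
  have hderiv : ∀ t ∈ uIcc (0:ℝ) p, HasDerivAt (fun t : ℝ => x * t + (1 - t) ^ x)
      (x - x * (1 - t) ^ (x - 1)) t := by
    intro t _
    have h1 : HasDerivAt (fun t : ℝ => 1 - t) (-1) t := by
      simpa using (hasDerivAt_id t).const_sub 1
    have h2 : HasDerivAt (fun t : ℝ => (1 - t) ^ x) (-1 * x * (1 - t) ^ (x - 1)) t :=
      h1.rpow_const (Or.inr (by linarith))
    have h3 : HasDerivAt (fun t : ℝ => x * t) x t := by
      simpa using (hasDerivAt_id t).const_mul x
    have := h3.add h2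
    refine this.congr_deriv ?_
    ring
  have hcont : Continuous (fun t : ℝ => x - x * (1 - t) ^ (x - 1)) := by
    exact continuous_const.sub (continuous_const.mul
      ((Real.continuous_rpow_const (by linarith)).comp (continuous_const.sub continuous_id)))
  have := intervalIntegral.integral_eq_sub_of_hasDerivAt hderiv (hcont.intervalIntegrable _ _)
  rw [this]
  simp [Real.one_rpow]
  ring

lemma N_nonneg {x p : ℝ} (hx : 2 < x) (hp0 : 0 ≤ p) (hp1 : p ≤ 1) :
    0 ≤ x * p - 1 + (1 - p) ^ x := by
  rw [N_eq hx hp0 hp1]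
  refine intervalIntegral.integral_nonneg hp0 fun t ht => ?_
  have h1 : (1 - t) ^ (x - 1) ≤ 1 :=
    Real.rpow_le_one (by linarith [ht.2]) (by linarith [ht.1]) (by linarith)
  nlinarith

lemma N_le {x p : ℝ} (hx : 2 < x) (hp0 : 0 ≤ p) (hp1 : p ≤ 1) :
    x * p - 1 + (1 - p) ^ x ≤ x * (x - 1) / 2 * p ^ 2 := by
  rw [N_eq hx hp0 hp1]
  have hcont : Continuous (fun t : ℝ => x - x * (1 - t) ^ (x - 1)) :=
    continuous_const.sub (continuous_const.mul
      ((Real.continuous_rpow_const (by linarith)).comp (continuous_const.sub continuous_id)))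
  have h1 : (∫ t in (0:ℝ)..p, (x - x * (1 - t) ^ (x - 1)))
      ≤ ∫ t in (0:ℝ)..p, x * (x - 1) * t := by
    refine intervalIntegral.integral_mono_on hp0 (hcont.intervalIntegrable _ _)
      (by apply Continuous.intervalIntegrable; continuity) fun t ht => ?_
    have hb : 1 + (x - 1) * -t ≤ (1 + -t) ^ (x - 1) :=
      one_add_mul_self_le_rpow_one_add (by linarith [ht.1, ht.2]) (by linarith)
    have hb' : 1 - (x - 1) * t ≤ (1 - t) ^ (x - 1) := by
      have h1t : (1 - t : ℝ) = 1 + -t := by ring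
      rw [h1t]; linarith
    nlinarith
  have h2 : (∫ t in (0:ℝ)..p, x * (x - 1) * t) = x * (x - 1) / 2 * p ^ 2 := by
    rw [intervalIntegral.integral_const_mul]
    simp [integral_id]
    ring
  linarith

lemma muInt_abs_le {x p : ℝ} (hx : 2 < x) (hp : p ∈ Icc (0:ℝ) 1) :
    |muInt x p| ≤ x * (x - 1) / 2 := by
  rcases eq_or_lt_of_le hp.1 with rfl | hp0
  · rw [muInt, if_pos rfl, abs_of_nonneg (by nlinarith)]
  · rw [muInt, if_neg hp0.ne']
    have h0 := N_nonneg hx hp0.le hp.2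
    have h1 := N_le hx hp0.le hp.2
    rw [abs_of_nonneg (by positivity)]
    rw [div_le_iff₀ (by positivity)]
    calc x * p - 1 + (1 - p) ^ x ≤ x * (x - 1) / 2 * p ^ 2 := h1
      _ = x * (x - 1) / 2 * p ^ 2 := rfl

noncomputable def Dexp (x p : ℝ) : ℝ :=
  if p = 0 then 1/2
  else (1 - (1 - p) ^ x + x * (1 - p) ^ x * Real.log (1 - p)) / (x ^ 2 * p ^ 2)

lemma Dexp_eq {x p : ℝ} (hx : 2 < x) (hp0 : 0 < p) (hp1 : p ≤ 1) :
    Dexp x p = (∫ y in (0:ℝ)..p, (1 - y) ^ (x - 1) * Real.log (1 / (1 - y))) / p ^ 2 := by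
  rw [Dexp, if_neg hp0.ne', key_integral hx hp0 hp1, div_div]

lemma Dexp_norm_le {x p : ℝ} (hx : 2 < x) (hp : p ∈ Icc (0:ℝ) 1) :
    ‖Dexp x p‖ ≤ 1/2 := by
  rcases eq_or_lt_of_le hp.1 with rfl | hp0
  · rw [Dexp, if_pos rfl]; simp
  · rw [Dexp_eq hx hp0 hp.2, Real.norm_eq_abs,
      abs_of_nonneg (div_nonneg (phi_integral_nonneg hp0.le hp.2 hx.le) (by positivity))]
    rw [div_le_iff₀ (by positivity)]
    have := phi_integral_le hp0.le hp.2 hx.le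
    linarith

lemma Dexp_meas (x : ℝ) (hx : 2 < x) : Measurable (Dexp x) := by
  unfold Dexp
  refine Measurable.ite (measurableSet_singleton 0) measurable_const ?_
  have h1 : Measurable (fun p : ℝ => (1 - p) ^ x) :=
    ((Real.continuous_rpow_const (by linarith)).comp
      (continuous_const.sub continuous_id)).measurable
  have h2 : Measurable (fun p : ℝ => Real.log (1 - p)) :=
    Real.measurable_log.comp (measurable_const.sub measurable_id)
  exact ((measurable_const.sub h1).add ((h1.const_mul x).mul h2)).div
    ((measurable_const.mul (measurable_id.pow_const 2)))

lemma muInt_meas (x : ℝ) (hx : 2 < x) : Measurable (fun p => muInt x p) := by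
  unfold muInt
  refine Measurable.ite (measurableSet_singleton 0) measurable_const ?_
  have h1 : Measurable (fun p : ℝ => (1 - p) ^ x) :=
    ((Real.continuous_rpow_const (by linarith)).comp
      (continuous_const.sub continuous_id)).measurable
  exact (((measurable_const.mul measurable_id).sub measurable_const).add h1).div
    (measurable_id.pow_const 2)

lemma hasDeriv_muInt {p : ℝ} (hp : p ∈ Icc (0:ℝ) 1) {x' : ℝ} (hx' : 2 < x') :
    HasDerivAt (fun x => muInt x p / x) (Dexp x' p) x' := by
  rcases eq_or_lt_of_le hp.1 with rfl | hp0
  · -- p = 0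
    have hev : (fun x : ℝ => (x - 1) / 2) =ᶠ[𝓝 x'] (fun x => muInt x 0 / x) := by
      filter_upwards [eventually_ne_nhds (show x' ≠ 0 by linarith)] with x hx
      rw [muInt, if_pos rfl]
      field_simp
    have hd : HasDerivAt (fun x : ℝ => (x - 1) / 2) (1/2) x' := by
      simpa using ((hasDerivAt_id x').sub_const 1).div_const 2
    rw [Dexp, if_pos rfl]
    exact hd.congr_of_eventuallyEq hev.symm
  rcases eq_or_lt_of_le hp.2 with rfl | hp1
  · -- p = 1
    have hev : (fun x : ℝ => (x - 1) / x) =ᶠ[𝓝 x'] (fun x => muInt x 1 / x) := by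
      filter_upwards [eventually_ne_nhds (show x' ≠ 0 by linarith)] with x hx
      rw [muInt, if_neg one_ne_zero]
      norm_num [Real.zero_rpow hx]
    have hd : HasDerivAt (fun x : ℝ => (x - 1) / x) (1 / x' ^ 2) x' := by
      have := ((hasDerivAt_id x').sub_const 1).div (hasDerivAt_id x')
        (show x' ≠ 0 by linarith)
      refine this.congr_deriv ?_
      simp only [id]; ring
    have hD : Dexp x' 1 = 1 / x' ^ 2 := by
      rw [Dexp, if_neg one_ne_zero]
      norm_num [Real.zero_rpow (show x' ≠ 0 by linarith), Real.log_zero]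
    rw [hD]
    exact hd.congr_of_eventuallyEq hev.symm
  · -- 0 < p < 1
    have hb : 0 < 1 - p := by linarith
    have heq : (fun x => muInt x p / x) = fun x => (x * p - 1 + (1 - p) ^ x) / (p ^ 2 * x) := by
      funext x
      rw [muInt, if_neg hp0.ne', div_div]
    rw [heq]
    have hn : HasDerivAt (fun x : ℝ => x * p - 1 + (1 - p) ^ x)
        (p + (1 - p) ^ x' * Real.log (1 - p)) x' := by
      have h1 : HasDerivAt (fun x : ℝ => x * p - 1) p x' := by
        simpa using ((hasDerivAt_id x').mul_const p).sub_const 1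
      exact h1.add ((Real.hasStrictDerivAt_const_rpow hb x').hasDerivAt)
    have hd : HasDerivAt (fun x : ℝ => p ^ 2 * x) (p ^ 2) x' := by
      simpa using (hasDerivAt_id x').const_mul (p ^ 2)
    have := hn.div hd (by positivity)
    refine this.congr_deriv ?_
    rw [Dexp, if_neg hp0.ne']
    have hxne : x' ≠ 0 := by linarith
    have hpne : p ≠ 0 := hp0.ne'
    field_simp
    ring

section Fubini
variable (Λ : Measure ℝ) [IsFiniteMeasure Λ]

lemma Dexp_nonneg {x p : ℝ} (hx : 2 < x) (hp : p ∈ Icc (0:ℝ) 1) : 0 ≤ Dexp x p := by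
  rcases eq_or_lt_of_le hp.1 with rfl | hp0
  · rw [Dexp, if_pos rfl]; norm_num
  · rw [Dexp_eq hx hp0 hp.2]
    exact div_nonneg (phi_integral_nonneg hp0.le hp.2 hx.le) (by positivity)

lemma fubini_step {x : ℝ} (hx : 2 < x) :
    ∫ p in Ioc (0:ℝ) 1, Dexp x p ∂Λ
      = ∫ y in (0:ℝ)..1, (1 - y) ^ (x - 1) * Real.log (1 / (1 - y)) * T Λ y := by
  set φ : ℝ → ℝ := fun y => (1 - y) ^ (x - 1) * Real.log (1 / (1 - y)) with hφ
  set f : ℝ → ℝ → ℝ := fun p y => if y < p then φ y / p ^ 2 else 0 with hf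
  set μ : Measure ℝ := Λ.restrict (Ioc 0 1) with hμ
  set ν : Measure ℝ := volume.restrict (Ioc (0:ℝ) 1) with hν
  have hmeas : Measurable (Function.uncurry f) := by
    apply Measurable.ite (measurableSet_lt measurable_snd measurable_fst)
    · exact ((phi_meas hx.le).comp measurable_snd).div ((measurable_fst.pow_const 2))
    · exact measurable_const
  -- inner integral in y equals Dexp
  have hinner : ∀ p ∈ Ioc (0:ℝ) 1, ∫ y, f p y ∂ν = Dexp x p := by
    intro p hp
    have h1 : (fun y => f p y) = (Iio p).indicator (fun y => φ y / p ^ 2) := by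
      funext y
      by_cases h : y < p
      · rw [hf]; simp only [if_pos h, indicator_of_mem (mem_Iio.2 h)]
      · rw [hf]; simp only [if_neg h, indicator_of_notMem (fun hc => h (mem_Iio.1 hc))]
    rw [h1, integral_indicator measurableSet_Iio, hν,
      Measure.restrict_restrict measurableSet_Iio]
    have hset : Iio p ∩ Ioc (0:ℝ) 1 = Ioo 0 p := by
      ext t
      simp only [mem_inter_iff, mem_Iio, mem_Ioc, mem_Ioo]
      constructor
      · rintro ⟨h1, h2, h3⟩; exact ⟨h2, h1⟩
      · rintro ⟨h1, h2⟩; exact ⟨h2, h1, by linarith [hp.2]⟩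
    rw [hset, integral_div, ← integral_Ioc_eq_integral_Ioo,
      ← intervalIntegral.integral_of_le hp.1.le, Dexp_eq hx hp.1 hp.2]
  -- inner integral in p equals φ y * T y
  have hinner' : ∀ y ∈ Ioc (0:ℝ) 1, ∫ p, f p y ∂μ = φ y * T Λ y := by
    intro y hy
    have h1 : (fun p => f p y) = (Ioi y).indicator (fun p => φ y * (1 / p ^ 2)) := by
      funext p
      by_cases h : y < p
      · rw [hf]; simp only [if_pos h, indicator_of_mem (mem_Ioi.2 h)]; ring
      · rw [hf]; simp only [if_neg h, indicator_of_notMem (fun hc => h (mem_Ioi.1 hc))]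
    rw [h1, integral_indicator measurableSet_Ioi, hμ,
      Measure.restrict_restrict measurableSet_Ioi]
    have hset : Ioi y ∩ Ioc (0:ℝ) 1 = Ioc y 1 := by
      ext t
      simp only [mem_inter_iff, mem_Ioi, mem_Ioc]
      constructor
      · rintro ⟨h1, _, h3⟩; exact ⟨h1, h3⟩
      · rintro ⟨h1, h2⟩; exact ⟨h1, lt_trans hy.1 h1, h2⟩
    rw [hset, integral_const_mul]
    rfl
  have hsm : AEStronglyMeasurable (Function.uncurry f) (μ.prod ν) :=
    hmeas.aestronglyMeasurable
  have hint : Integrable (Function.uncurry f) (μ.prod ν) := by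
    rw [integrable_prod_iff hsm]
    constructor
    · filter_upwards [ae_restrict_mem measurableSet_Ioc] with p hp
      refine Integrable.mono' (integrable_const (1 / p ^ 2)) ?_ ?_
      · exact (hmeas.comp measurable_prodMk_left).aestronglyMeasurable
      · filter_upwards [ae_restrict_mem measurableSet_Ioc] with y hy
        simp only [Function.uncurry_apply_pair]
        by_cases h : y < p
        · simp only [hf, if_pos h]
          rw [Real.norm_eq_abs,
            abs_of_nonneg (div_nonneg (phi_nonneg hx.le hy.1.le hy.2) (by positivity))]
          gcongr
          · exact le_trans (phi_le hx.le hy.1.le hy.2) hy.2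
        · simp only [hf, if_neg h, norm_zero]
          positivity
    · refine Integrable.mono' (integrable_const (1/2)) (hsm.norm.integral_prod_right') ?_
      filter_upwards [ae_restrict_mem measurableSet_Ioc] with p hp
      have hnn : (fun y => ‖Function.uncurry f (p, y)‖) =ᶠ[MeasureTheory.ae ν]
          fun y => f p y := by
        filter_upwards [ae_restrict_mem measurableSet_Ioc] with y hy
        have h0 : 0 ≤ f p y := by
          simp only [hf]
          by_cases h : y < p
          · simp only [if_pos h]
            exact div_nonneg (phi_nonneg hx.le hy.1.le hy.2) (by positivity)
          · simp [h]
        simp only [Function.uncurry_apply_pair, Real.norm_eq_abs, abs_of_nonneg h0]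
      rw [Real.norm_eq_abs, integral_congr_ae hnn, hinner p hp,
        abs_of_nonneg (Dexp_nonneg hx ⟨hp.1.le, hp.2⟩)]
      have := Dexp_norm_le hx ⟨hp.1.le, hp.2⟩
      rwa [Real.norm_eq_abs, abs_of_nonneg (Dexp_nonneg hx ⟨hp.1.le, hp.2⟩)] at this
  calc ∫ p in Ioc (0:ℝ) 1, Dexp x p ∂Λ
      = ∫ p, (∫ y, f p y ∂ν) ∂μ := by
        refine (integral_congr_ae ?_).symm
        filter_upwards [ae_restrict_mem measurableSet_Ioc] with p hp
        exact hinner p hp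
    _ = ∫ y, (∫ p, f p y ∂μ) ∂ν := integral_integral_swap hint
    _ = ∫ y in Ioc (0:ℝ) 1, φ y * T Λ y := by
        refine integral_congr_ae ?_
        filter_upwards [ae_restrict_mem measurableSet_Ioc] with y hy
        exact hinner' y hy
    _ = ∫ y in (0:ℝ)..1, φ y * T Λ y :=
        (intervalIntegral.integral_of_le zero_le_one).symm

end Fubini
/-- `κ` is differentiable on `(2,∞)` with derivative
`κ'(x) = Λ({0})/2 + ∫_0^1 (1−y)^{x−1} log(1/(1−y)) T(y) dy`. -/
theorem kappa_hasDerivAt (Λ : Measure ℝ) [IsFiniteMeasure Λ] (hΛ : Λ ≠ 0)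
    (hsupp : Λ (Set.Icc (0:ℝ) 1)ᶜ = 0) :
    ∀ x : ℝ, 2 < x →
      HasDerivAt (kappa Λ)
        ((Λ {0}).toReal / 2 +
          ∫ y in (0:ℝ)..1, (1 - y) ^ (x - 1) * Real.log (1 / (1 - y)) * T Λ y) x := by
  intro x hx
  have hx0 : 0 < x := by linarith
  have hkappa : kappa Λ = fun x => ∫ p in Icc (0:ℝ) 1, muInt x p / x ∂Λ := by
    funext x
    simp only [kappa, mu]
    rw [integral_div]
  set ε : ℝ := (x - 2) / 2 with hε
  have hε0 : 0 < ε := by rw [hε]; linarith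
  have hball : ∀ x' ∈ Metric.ball x ε, 2 < x' := by
    intro x' hx'
    rw [Metric.mem_ball, Real.dist_eq] at hx'
    have := abs_lt.1 hx'
    rw [hε] at this
    linarith [this.1]
  have hF_meas : ∀ᶠ x' in 𝓝 x, AEStronglyMeasurable (fun p => muInt x' p / x')
      (Λ.restrict (Icc 0 1)) := by
    filter_upwards [Ioi_mem_nhds hx] with x' hx'
    exact ((muInt_meas x' hx').div_const x').aestronglyMeasurable
  have hF_int : Integrable (fun p => muInt x p / x) (Λ.restrict (Icc 0 1)) := by
    refine Integrable.mono' (integrable_const (x * (x - 1) / 2 / x))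
      ((muInt_meas x hx).div_const x).aestronglyMeasurable ?_
    filter_upwards [ae_restrict_mem measurableSet_Icc] with p hp
    rw [norm_div, Real.norm_eq_abs, Real.norm_eq_abs, abs_of_pos hx0]
    gcongr
    exact muInt_abs_le hx hp
  have hF'_meas : AEStronglyMeasurable (fun p => Dexp x p) (Λ.restrict (Icc 0 1)) :=
    (Dexp_meas x hx).aestronglyMeasurable
  have h_bound : ∀ᵐ p ∂(Λ.restrict (Icc 0 1)), ∀ x' ∈ Metric.ball x ε,
      ‖Dexp x' p‖ ≤ 1/2 := by
    filter_upwards [ae_restrict_mem measurableSet_Icc] with p hp x' hx'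
    exact Dexp_norm_le (hball x' hx') hp
  have h_diff : ∀ᵐ p ∂(Λ.restrict (Icc 0 1)), ∀ x' ∈ Metric.ball x ε,
      HasDerivAt (fun x => muInt x p / x) (Dexp x' p) x' := by
    filter_upwards [ae_restrict_mem measurableSet_Icc] with p hp x' hx'
    exact hasDeriv_muInt hp (hball x' hx')
  obtain ⟨hF'_int, hder⟩ := hasDerivAt_integral_of_dominated_loc_of_deriv_le (Metric.ball_mem_nhds x hε0) hF_meas
    hF_int hF'_meas h_bound (integrable_const _) h_diff
  have hval : (∫ p in Icc (0:ℝ) 1, Dexp x p ∂Λ)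
      = (Λ {0}).toReal / 2 +
        ∫ y in (0:ℝ)..1, (1 - y) ^ (x - 1) * Real.log (1 / (1 - y)) * T Λ y := by
    have hdecomp : Icc (0:ℝ) 1 = {0} ∪ Ioc 0 1 := by
      rw [← Set.Ioc_insert_left zero_le_one, Set.insert_eq]
    have hdisj : Disjoint ({0} : Set ℝ) (Ioc 0 1) := by
      simp [Set.disjoint_singleton_left]
    have hIcc : IntegrableOn (fun p => Dexp x p) (Icc (0:ℝ) 1) Λ := hF'_int
    have hint1 : IntegrableOn (fun p => Dexp x p) ({0} : Set ℝ) Λ :=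
      hIcc.mono_set (by rw [hdecomp]; exact subset_union_left)
    have hint2 : IntegrableOn (fun p => Dexp x p) (Ioc (0:ℝ) 1) Λ :=
      hIcc.mono_set (by rw [hdecomp]; exact subset_union_right)
    rw [hdecomp, setIntegral_union hdisj measurableSet_Ioc hint1 hint2,
      integral_singleton, fubini_step Λ hx]
    congr 1
    rw [Dexp, if_pos rfl]
    rw [smul_eq_mul]
    rw [measureReal_def]; ring
  rw [hkappa, ← hval]
  exact hder
end
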